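/- Let λ_1, …, λ_l be distinct nonzero complex numbers, α_1, …, α_l non-negative integers, and 0 ≤ k ≤ l. Set g(x) = ∏_{i=1}^k (1 − λ_i x)^{α_i} and f(x) = ∏_{i=k+1}^l (1 − λ_i x)^{α_i}, and assume deg f < deg g. Let b : ℕ → ℂ be defined by the power series expansion f(x)/g(x) = ∑_{n≥0} b(n) x^n. Then for every n ≥ 1, n·b(n) = ∑_{r=1}^n ( ∑_{i=1}^k α_i λ_i^r − ∑_{i=k+1}^l α_i λ_i^r ) · b(n − r). -/

import Mathlib

open PowerSeries

noncomputable def psLD (p : PowerSeries ℂ) : PowerSeries ℂ := (d⁄dX ℂ p) * p⁻¹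

noncomputable def psGeom (lam : ℂ) : PowerSeries ℂ :=
  PowerSeries.mk fun r => if r = 0 then 0 else lam ^ r

lemma psLD_mul {p q : PowerSeries ℂ} (hp : PowerSeries.constantCoeff p ≠ 0)
    (hq : PowerSeries.constantCoeff q ≠ 0) : psLD (p * q) = psLD p + psLD q := by
  have hp1 : p * p⁻¹ = 1 := PowerSeries.mul_inv_cancel _ hp
  have hq1 : q * q⁻¹ = 1 := PowerSeries.mul_inv_cancel _ hq
  unfold psLD
  rw [PowerSeries.mul_inv_rev, Derivation.leibniz, smul_eq_mul, smul_eq_mul]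
  linear_combination (d⁄dX ℂ q * q⁻¹) * hp1 + (d⁄dX ℂ p * p⁻¹) * hq1

lemma psLD_one : psLD 1 = 0 := by unfold psLD; simp

lemma psLD_inv {p : PowerSeries ℂ} (hp : PowerSeries.constantCoeff p ≠ 0) :
    psLD p⁻¹ = - psLD p := by
  have h := psLD_mul hp (p := p) (q := p⁻¹)
    (by rw [PowerSeries.constantCoeff_inv]; exact inv_ne_zero hp)
  rw [PowerSeries.mul_inv_cancel _ hp, psLD_one] at h
  exact eq_neg_of_add_eq_zero_right h.symm

lemma psLD_pow {p : PowerSeries ℂ} (hp : PowerSeries.constantCoeff p ≠ 0) (n : ℕ) :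
    psLD (p ^ n) = n • psLD p := by
  induction n with
  | zero => simpa using psLD_one
  | succ n ih =>
      rw [pow_succ, psLD_mul (by rw [map_pow]; exact pow_ne_zero _ hp) hp, ih, succ_nsmul]

lemma psLD_prod {ι : Type*} (s : Finset ι) (p : ι → PowerSeries ℂ)
    (h : ∀ i ∈ s, PowerSeries.constantCoeff (p i) ≠ 0) :
    psLD (∏ i ∈ s, p i) = ∑ i ∈ s, psLD (p i) := by
  induction s using Finset.cons_induction with
  | empty => simpa using psLD_one
  | cons a s ha ih =>
      rw [Finset.prod_cons, Finset.sum_cons,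
        psLD_mul (h a (Finset.mem_cons_self a s))
          (by rw [map_prod]
              exact Finset.prod_ne_zero_iff.2 fun i hi => h i (Finset.mem_cons_of_mem hi)),
        ih fun i hi => h i (Finset.mem_cons_of_mem hi)]

lemma psGeom_mul (lam : ℂ) :
    psGeom lam * (1 - PowerSeries.C lam * PowerSeries.X) = PowerSeries.C lam * PowerSeries.X := by
  have hrw : psGeom lam * (PowerSeries.C lam * PowerSeries.X)
      = PowerSeries.C lam * psGeom lam * PowerSeries.X := by ring
  ext n
  rw [mul_sub, mul_one, map_sub, hrw]
  cases n with
  | zero => simp [psGeom]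
  | succ n =>
      rw [PowerSeries.coeff_succ_mul_X, PowerSeries.coeff_C_mul]
      cases n with
      | zero => simp [psGeom]
      | succ n => simp [psGeom, PowerSeries.coeff_X, pow_succ]; ring

lemma X_mul_psLD_oneSub (lam : ℂ) :
    PowerSeries.X * psLD (1 - PowerSeries.C lam * PowerSeries.X) = - psGeom lam := by
  have hu : PowerSeries.constantCoeff (1 - PowerSeries.C lam * PowerSeries.X) ≠ 0 := by simp
  have h1 : d⁄dX ℂ (1 - PowerSeries.C lam * PowerSeries.X) = - PowerSeries.C lam := by
    rw [map_sub, ← PowerSeries.smul_eq_C_mul, Derivation.map_smul, PowerSeries.derivative_X]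
    simp [PowerSeries.smul_eq_C_mul]
  have h2 : psGeom lam = PowerSeries.C lam * PowerSeries.X
      * (1 - PowerSeries.C lam * PowerSeries.X)⁻¹ := by
    conv_lhs => rw [← mul_one (psGeom lam), ← PowerSeries.mul_inv_cancel _ hu, ← mul_assoc,
      psGeom_mul]
  rw [psLD, h1, h2]; ring

/-- **Lemma on power-series coefficients.** Let `λ_1, …, λ_l` be distinct
nonzero complex numbers, `α_i ∈ ℕ`, `0 ≤ k ≤ l`, `g = ∏_{i≤k} (1-λ_i x)^{α_i}`,
`f = ∏_{i>k} (1-λ_i x)^{α_i}`, with `deg f < deg g`.  If `f/g = ∑ b(n) x^n`, then for all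
`n ≥ 1`, `n·b(n) = ∑_{r=1}^n (∑_{i≤k} α_i λ_i^r − ∑_{i>k} α_i λ_i^r) b(n-r)`. -/
theorem stmt_7 (l : ℕ) (lam : Fin l → ℂ) (hdist : Function.Injective lam)
    (hne : ∀ i, lam i ≠ 0) (α : Fin l → ℕ) (k : ℕ) (hk : k ≤ l)
    (g f : Polynomial ℂ)
    (hg : g = ∏ i ∈ Finset.univ.filter (fun i : Fin l => (i : ℕ) < k),
      (1 - Polynomial.C (lam i) * Polynomial.X) ^ α i)
    (hf : f = ∏ i ∈ Finset.univ.filter (fun i : Fin l => ¬ (i : ℕ) < k),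
      (1 - Polynomial.C (lam i) * Polynomial.X) ^ α i)
    (hdeg : f.natDegree < g.natDegree)
    (b : ℕ → ℂ)
    (hb : (g : PowerSeries ℂ) * PowerSeries.mk b = (f : PowerSeries ℂ)) :
    ∀ m : ℕ, 1 ≤ m →
      (m : ℂ) * b m =
        ∑ r ∈ Finset.Icc 1 m,
          ((∑ i ∈ Finset.univ.filter (fun i : Fin l => (i : ℕ) < k), (α i : ℂ) * lam i ^ r) -
            ∑ i ∈ Finset.univ.filter (fun i : Fin l => ¬ (i : ℕ) < k), (α i : ℂ) * lam i ^ r) *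
          b (m - r) := by
  intro m hm
  set sk := Finset.univ.filter (fun i : Fin l => (i : ℕ) < k) with hsk
  set sf := Finset.univ.filter (fun i : Fin l => ¬ (i : ℕ) < k) with hsf
  have ccu : ∀ z : ℂ,
      PowerSeries.constantCoeff (1 - PowerSeries.C z * PowerSeries.X) = 1 := by
    intro z; simp
  -- coercions
  have hgc : (g : PowerSeries ℂ)
      = ∏ i ∈ sk, (1 - PowerSeries.C (lam i) * PowerSeries.X) ^ α i := by
    rw [hg, ← Polynomial.coeToPowerSeries.ringHom_apply, map_prod]
    refine Finset.prod_congr rfl fun i _ => ?_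
    rw [map_pow, map_sub, map_one, map_mul, Polynomial.coeToPowerSeries.ringHom_apply,
      Polynomial.coeToPowerSeries.ringHom_apply, Polynomial.coe_C, Polynomial.coe_X]
  have hfc : (f : PowerSeries ℂ)
      = ∏ i ∈ sf, (1 - PowerSeries.C (lam i) * PowerSeries.X) ^ α i := by
    rw [hf, ← Polynomial.coeToPowerSeries.ringHom_apply, map_prod]
    refine Finset.prod_congr rfl fun i _ => ?_
    rw [map_pow, map_sub, map_one, map_mul, Polynomial.coeToPowerSeries.ringHom_apply,
      Polynomial.coeToPowerSeries.ringHom_apply, Polynomial.coe_C, Polynomial.coe_X]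
  have ccg : PowerSeries.constantCoeff (g : PowerSeries ℂ) ≠ 0 := by
    rw [hgc, map_prod]
    refine Finset.prod_ne_zero_iff.2 fun i _ => ?_
    rw [map_pow, ccu, one_pow]; exact one_ne_zero
  have ccf : PowerSeries.constantCoeff (f : PowerSeries ℂ) ≠ 0 := by
    rw [hfc, map_prod]
    refine Finset.prod_ne_zero_iff.2 fun i _ => ?_
    rw [map_pow, ccu, one_pow]; exact one_ne_zero
  have ccB : PowerSeries.constantCoeff (PowerSeries.mk b) ≠ 0 := by
    intro h0
    apply ccf
    rw [← hb, map_mul, h0, mul_zero]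
  have hBeq : PowerSeries.mk b = (g : PowerSeries ℂ)⁻¹ * (f : PowerSeries ℂ) := by
    rw [← hb, ← mul_assoc, PowerSeries.inv_mul_cancel _ ccg, one_mul]
  -- log derivatives
  have hLDg : psLD (g : PowerSeries ℂ)
      = ∑ i ∈ sk, (α i) • psLD (1 - PowerSeries.C (lam i) * PowerSeries.X) := by
    rw [hgc, psLD_prod _ _ (fun i _ => by rw [map_pow, ccu, one_pow]; exact one_ne_zero)]
    exact Finset.sum_congr rfl fun i _ => psLD_pow (by rw [ccu]; exact one_ne_zero) _
  have hLDf : psLD (f : PowerSeries ℂ)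
      = ∑ i ∈ sf, (α i) • psLD (1 - PowerSeries.C (lam i) * PowerSeries.X) := by
    rw [hfc, psLD_prod _ _ (fun i _ => by rw [map_pow, ccu, one_pow]; exact one_ne_zero)]
    exact Finset.sum_congr rfl fun i _ => psLD_pow (by rw [ccu]; exact one_ne_zero) _
  have hLDB : psLD (PowerSeries.mk b)
      = (∑ i ∈ sf, (α i) • psLD (1 - PowerSeries.C (lam i) * PowerSeries.X))
        - ∑ i ∈ sk, (α i) • psLD (1 - PowerSeries.C (lam i) * PowerSeries.X) := by
    rw [hBeq, psLD_mul (by rw [PowerSeries.constantCoeff_inv]; exact inv_ne_zero ccg) ccf,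
      psLD_inv ccg, hLDg, hLDf]
    ring
  -- main power series identity
  have hS : PowerSeries.X * d⁄dX ℂ (PowerSeries.mk b)
      = ((∑ i ∈ sk, (α i) • psGeom (lam i)) - ∑ i ∈ sf, (α i) • psGeom (lam i))
        * PowerSeries.mk b := by
    have hDB : d⁄dX ℂ (PowerSeries.mk b) = psLD (PowerSeries.mk b) * PowerSeries.mk b := by
      unfold psLD
      rw [mul_assoc, PowerSeries.inv_mul_cancel _ ccB, mul_one]
    rw [hDB, ← mul_assoc]
    congr 1
    rw [hLDB, mul_sub, Finset.mul_sum, Finset.mul_sum]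
    simp only [mul_smul_comm, X_mul_psLD_oneSub, smul_neg, Finset.sum_neg_distrib]
    abel
  -- coefficient of S
  have hcS : ∀ r : ℕ, PowerSeries.coeff r
        ((∑ i ∈ sk, (α i) • psGeom (lam i)) - ∑ i ∈ sf, (α i) • psGeom (lam i))
      = if r = 0 then 0
        else ((∑ i ∈ sk, (α i : ℂ) * lam i ^ r) - ∑ i ∈ sf, (α i : ℂ) * lam i ^ r) := by
    intro r
    have hterm : ∀ (c : ℕ) (z : ℂ), PowerSeries.coeff r (c • psGeom z)
        = (c : ℂ) * (if r = 0 then 0 else z ^ r) := by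
      intro c z
      rw [map_nsmul]
      simp [psGeom, nsmul_eq_mul]
    rw [map_sub, map_sum, map_sum]
    simp only [hterm]
    split_ifs with h <;> simp
  -- extract coefficient m
  obtain ⟨n, rfl⟩ : ∃ n, m = n + 1 := ⟨m - 1, (Nat.succ_pred_eq_of_pos hm).symm⟩
  have hc := congrArg (PowerSeries.coeff (n + 1)) hS
  rw [PowerSeries.coeff_succ_X_mul, PowerSeries.coeff_derivative, PowerSeries.coeff_mk] at hc
  rw [PowerSeries.coeff_mul, Finset.Nat.sum_antidiagonal_eq_sum_range_succ_mk] at hc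
  simp only [hcS, PowerSeries.coeff_mk] at hc
  push_cast at hc ⊢
  rw [mul_comm, hc]
  have hsub : Finset.Icc 1 (n + 1) ⊆ Finset.range ((n + 1) + 1) := fun x hx => by
    simp only [Finset.mem_Icc, Finset.mem_range] at *
    omega
  rw [Nat.succ_eq_add_one] at hc ⊢
  rw [← Finset.sum_subset hsub (fun x hx hnx => by
      have hx0 : x = 0 := by
        simp only [Finset.mem_Icc, Finset.mem_range] at hx hnx
        omega
      simp [hx0])]
  refine Finset.sum_congr rfl fun r hr => ?_
  have : r ≠ 0 := by
    simp only [Finset.mem_Icc] at hr; omega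
  simp [this]
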